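/- Let Z be a real T×m matrix whose m columns are partitioned into N blocks, let Y ∈ ℝ^T, λ̃ ≥ 0, and κ > 0 with T ≥ 1, and suppose the restricted eigenvalue condition ZᵀZ ⪰ κT·I_m holds (i.e., ‖Zu‖₂² ≥ κT‖u‖₂² for all u ∈ ℝ^m). Let β ∈ ℝ^m have block support contained in S₀ ⊆ {1,…,N}, i.e., β_d = 0 for d ∉ S₀, and suppose β̂ ∈ ℝ^m satisfies ‖Y − Zβ̂‖₂² + λ̃·Σ_{d=1}^{N}‖β̂_d‖₂ ≤ ‖Y − Zβ‖₂² + λ̃·Σ_{d=1}^{N}‖β_d‖₂. Then ‖β − β̂‖₂² ≤ 8(κT)⁻¹·‖Y − Zβ‖₂² + 4(κT)⁻²·λ̃²·|S₀|. -/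

import Mathlib

open scoped BigOperators
open Matrix

noncomputable def blockNorm {N v : ℕ} (r : Fin N × Fin v → ℝ) (d : Fin N) : ℝ :=
  Real.sqrt (∑ j, r (d, j) ^ 2)

lemma blockNorm_nonneg {N v : ℕ} (r : Fin N × Fin v → ℝ) (d : Fin N) :
    0 ≤ blockNorm r d := Real.sqrt_nonneg _

lemma blockNorm_sq {N v : ℕ} (r : Fin N × Fin v → ℝ) (d : Fin N) :
    blockNorm r d ^ 2 = ∑ j, r (d, j) ^ 2 :=
  Real.sq_sqrt (Finset.sum_nonneg fun _ _ => sq_nonneg _)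

lemma blockNorm_add_le {N v : ℕ} (x y : Fin N × Fin v → ℝ) (d : Fin N) :
    blockNorm (fun p => x p + y p) d ≤ blockNorm x d + blockNorm y d := by
  have h := norm_add_le ((WithLp.equiv 2 (Fin v → ℝ)).symm fun j => x (d, j))
    ((WithLp.equiv 2 (Fin v → ℝ)).symm fun j => y (d, j))
  simp only [EuclideanSpace.norm_eq] at h
  simpa [blockNorm, sq_abs] using h

lemma key_ineq (a w s lam R : ℝ) (ha : 0 < a) (hlam : 0 ≤ lam) (hw0 : 0 ≤ w) (hs0 : 0 ≤ s)
    (h : a * w ^ 2 ≤ 4 * R + 2 * lam * (s * w)) :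
    a ^ 2 * w ^ 2 ≤ 8 * a * R + 4 * lam ^ 2 * s ^ 2 := by
  nlinarith [mul_le_mul_of_nonneg_left h (by positivity : (0:ℝ) ≤ 2 * a),
    sq_nonneg (a * w - 2 * lam * s)]

/-- Deterministic core estimate (eq. (21) of the paper): under the restricted eigenvalue
condition `‖Zu‖₂² ≥ κT‖u‖₂²`, if the group-LASSO estimator `β̂` fits at least as well as
the oracle `β` (supported on `S₀`), then
`‖β − β̂‖₂² ≤ 8(κT)⁻¹‖Y − Zβ‖₂² + 4(κT)⁻²λ̃²|S₀|`. -/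
theorem group_lasso_error_bound {T N v : ℕ} (hT : 1 ≤ T)
    (Z : Matrix (Fin T) (Fin N × Fin v) ℝ) (Y : Fin T → ℝ)
    (lam κ : ℝ) (hlam : 0 ≤ lam) (hκ : 0 < κ)
    (hRE : ∀ u : Fin N × Fin v → ℝ,
      κ * (T : ℝ) * (∑ p, u p ^ 2) ≤ ∑ t, (Z.mulVec u t) ^ 2)
    (S₀ : Finset (Fin N)) (β βhat : Fin N × Fin v → ℝ)
    (hsupp : ∀ d ∉ S₀, ∀ j, β (d, j) = 0)
    (hopt : (∑ t, (Y t - Z.mulVec βhat t) ^ 2) + lam * ∑ d, blockNorm βhat d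
      ≤ (∑ t, (Y t - Z.mulVec β t) ^ 2) + lam * ∑ d, blockNorm β d) :
    (∑ p, (β p - βhat p) ^ 2)
      ≤ 8 * (κ * (T : ℝ))⁻¹ * (∑ t, (Y t - Z.mulVec β t) ^ 2)
        + 4 * (κ * (T : ℝ))⁻¹ ^ 2 * lam ^ 2 * (S₀.card : ℝ) := by
  set a : ℝ := κ * (T : ℝ) with ha_def
  have ha : 0 < a := by
    have : (0:ℝ) < T := by exact_mod_cast hT
    exact mul_pos hκ this
  set u : Fin N × Fin v → ℝ := fun p => β p - βhat p with hu_def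
  set R : ℝ := ∑ t, (Y t - Z.mulVec β t) ^ 2 with hR_def
  set Rh : ℝ := ∑ t, (Y t - Z.mulVec βhat t) ^ 2 with hRh_def
  set U : ℝ := ∑ p, u p ^ 2 with hU_def
  have hU0 : 0 ≤ U := Finset.sum_nonneg fun _ _ => sq_nonneg _
  have hR0 : 0 ≤ R := Finset.sum_nonneg fun _ _ => sq_nonneg _
  have hRh0 : 0 ≤ Rh := Finset.sum_nonneg fun _ _ => sq_nonneg _
  -- restricted eigenvalue
  have h1 : a * U ≤ ∑ t, (Z.mulVec u t) ^ 2 := hRE u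
  -- Zu = Zβ - Zβhat
  have hZu : ∀ t, Z.mulVec u t = Z.mulVec β t - Z.mulVec βhat t := by
    intro t
    have : u = β - βhat := rfl
    rw [this, Matrix.mulVec_sub]; rfl
  have h2 : ∑ t, (Z.mulVec u t) ^ 2 ≤ 2 * Rh + 2 * R := by
    have : ∀ t ∈ Finset.univ, (Z.mulVec u t) ^ 2
        ≤ 2 * (Y t - Z.mulVec βhat t) ^ 2 + 2 * (Y t - Z.mulVec β t) ^ 2 := by
      intro t _
      rw [hZu t]
      nlinarith [sq_nonneg ((Y t - Z.mulVec βhat t) + (Y t - Z.mulVec β t))]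
    calc ∑ t, (Z.mulVec u t) ^ 2
        ≤ ∑ t, (2 * (Y t - Z.mulVec βhat t) ^ 2 + 2 * (Y t - Z.mulVec β t) ^ 2) :=
          Finset.sum_le_sum this
      _ = 2 * Rh + 2 * R := by
          rw [Finset.sum_add_distrib, ← Finset.mul_sum, ← Finset.mul_sum]
  -- the penalty difference
  set D : ℝ := ∑ d ∈ S₀, blockNorm u d with hD_def
  have hD0 : 0 ≤ D := Finset.sum_nonneg fun _ _ => blockNorm_nonneg _ _
  have h3 : (∑ d, blockNorm β d) - (∑ d, blockNorm βhat d) ≤ D := by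
    have hβsum : ∑ d, blockNorm β d = ∑ d ∈ S₀, blockNorm β d := by
      refine (Finset.sum_subset (Finset.subset_univ S₀) ?_).symm
      intro d _ hd
      have : ∀ j, β (d, j) = 0 := hsupp d hd
      simp [blockNorm, this]
    have hβhsum : ∑ d ∈ S₀, blockNorm βhat d ≤ ∑ d, blockNorm βhat d :=
      Finset.sum_le_sum_of_subset_of_nonneg (Finset.subset_univ S₀)
        (fun d _ _ => blockNorm_nonneg _ _)
    have htri : ∀ d ∈ S₀, blockNorm β d - blockNorm βhat d ≤ blockNorm u d := by
      intro d _
      have h := blockNorm_add_le u βhat d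
      have hβ : (fun p => u p + βhat p) = β := by funext p; simp [hu_def]
      rw [hβ] at h
      linarith
    calc (∑ d, blockNorm β d) - (∑ d, blockNorm βhat d)
        ≤ (∑ d ∈ S₀, blockNorm β d) - ∑ d ∈ S₀, blockNorm βhat d := by
          rw [hβsum]; linarith
      _ = ∑ d ∈ S₀, (blockNorm β d - blockNorm βhat d) := by
          rw [Finset.sum_sub_distrib]
      _ ≤ D := Finset.sum_le_sum htri
  -- Cauchy-Schwarz: D² ≤ card · U
  have hD2 : D ^ 2 ≤ (S₀.card : ℝ) * U := by
    have hcs := sq_sum_le_card_mul_sum_sq (s := S₀) (f := fun d => blockNorm u d)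
    have hsub : ∑ d ∈ S₀, blockNorm u d ^ 2 ≤ U := by
      have : ∀ d ∈ S₀, blockNorm u d ^ 2 = ∑ j, u (d, j) ^ 2 :=
        fun d _ => blockNorm_sq u d
      rw [Finset.sum_congr rfl this]
      rw [hU_def, Fintype.sum_prod_type]
      exact Finset.sum_le_sum_of_subset_of_nonneg (Finset.subset_univ S₀)
        (fun d _ _ => Finset.sum_nonneg fun _ _ => sq_nonneg _)
    calc D ^ 2 ≤ (S₀.card : ℝ) * ∑ d ∈ S₀, blockNorm u d ^ 2 := hcs
      _ ≤ (S₀.card : ℝ) * U := by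
          exact mul_le_mul_of_nonneg_left hsub (by positivity)
  -- combine: a U ≤ 4R + 2 lam D
  have hmain : a * U ≤ 4 * R + 2 * lam * D := by
    have hRh : Rh ≤ R + lam * D := by
      have := mul_le_mul_of_nonneg_left h3 hlam
      nlinarith [hopt]
    linarith [h1.trans h2]
  -- replace D by s·w with w = √U, s = √card
  set w : ℝ := Real.sqrt U with hw_def
  set s : ℝ := Real.sqrt (S₀.card : ℝ) with hs_def
  have hw2 : w ^ 2 = U := Real.sq_sqrt hU0
  have hs2 : s ^ 2 = (S₀.card : ℝ) := Real.sq_sqrt (by positivity)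
  have hw0 : 0 ≤ w := Real.sqrt_nonneg _
  have hs0 : 0 ≤ s := Real.sqrt_nonneg _
  have hDle : D ≤ s * w := by
    have : D = Real.sqrt (D ^ 2) := (Real.sqrt_sq hD0).symm
    rw [this, hw_def, hs_def, ← Real.sqrt_mul (Nat.cast_nonneg _)]
    exact Real.sqrt_le_sqrt hD2
  have hmain' : a * w ^ 2 ≤ 4 * R + 2 * lam * (s * w) := by
    rw [hw2]
    have h2' : 2 * lam * D ≤ 2 * lam * (s * w) :=
      mul_le_mul_of_nonneg_left hDle (by positivity)
    linarith
  have hkey : a ^ 2 * U ≤ 8 * a * R + 4 * lam ^ 2 * (S₀.card : ℝ) := by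
    rw [← hw2, ← hs2]
    exact key_ineq a w s lam R ha hlam hw0 hs0 hmain'
  have hfin : U ≤ (8 * a * R + 4 * lam ^ 2 * (S₀.card : ℝ)) / a ^ 2 := by
    rw [le_div_iff₀ (pow_pos ha 2)]
    linarith [hkey]
  calc U ≤ (8 * a * R + 4 * lam ^ 2 * (S₀.card : ℝ)) / a ^ 2 := hfin
    _ = 8 * a⁻¹ * R + 4 * a⁻¹ ^ 2 * lam ^ 2 * (S₀.card : ℝ) := by
        field_simp
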